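/- Let (N,v) be a convex coalitional game, let i ∈ N be a player, and let c be a real number with v({i}) ≤ c ≤ v(N) − v(N∖{i}). Then the c-reduced game (N∖{i}, Ψ^{i→c}_v) is convex. -/
import Mathlib


open Finset

/-- A game is convex if marginal contributions increase with coalition size. -/
def IsConvex {α : Type*} [DecidableEq α] (v : Finset α → ℝ) : Prop :=
  ∀ (i : α) (S T : Finset α), S ⊆ T → i ∉ T →
    v (insert i S) - v S ≤ v (insert i T) - v T

/-- An integer game: every coalition value is an integer. -/
def IsIntegerGame {α : Type*} (v : Finset α → ℝ) : Prop :=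
  ∀ S : Finset α, ∃ z : ℤ, v S = (z : ℝ)

/-- A size-bounded game: `v S < |S|` for every nonempty coalition. -/
def IsSizeBounded {α : Type*} (v : Finset α → ℝ) : Prop :=
  ∀ S : Finset α, S.Nonempty → v S < (S.card : ℝ)

/-- A payoff vector belongs to the core. -/
def InCore {α : Type*} [Fintype α] [DecidableEq α] (v : Finset α → ℝ) (x : α → ℝ) : Prop :=
  (∑ i, x i) = v Finset.univ ∧ ∀ S : Finset α, v S ≤ ∑ i ∈ S, x i

/-- The set of players preceding `i` in the ordering `σ`. -/
def preSet {α : Type*} [Fintype α] [DecidableEq α]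
    (σ : α ≃ Fin (Fintype.card α)) (i : α) : Finset α :=
  Finset.univ.filter (fun j => σ j < σ i)

/-- The Shapley value of player `i`: average marginal contribution over all orderings. -/
noncomputable def SV {α : Type*} [Fintype α] [DecidableEq α]
    (v : Finset α → ℝ) (i : α) : ℝ :=
  (∑ σ : α ≃ Fin (Fintype.card α), (v (insert i (preSet σ i)) - v (preSet σ i))) /
    (Nat.factorial (Fintype.card α) : ℝ)

/-- The Harsanyi dividend of a coalition. -/
noncomputable def dividend {α : Type*} [DecidableEq α] (v : Finset α → ℝ) (S : Finset α) : ℝ :=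
  ∑ T ∈ S.powerset, (-1 : ℝ) ^ (S.card - T.card) * v T

/-- A positive game: all Harsanyi dividends are nonnegative. -/
def IsPositive {α : Type*} [DecidableEq α] (v : Finset α → ℝ) : Prop :=
  ∀ S : Finset α, 0 ≤ dividend v S

/-- The `c`-reduced game on player set `N \ {i}`. -/
noncomputable def reducedGame {α : Type*} [Fintype α] [DecidableEq α]
    (v : Finset α → ℝ) (i : α) (c : ℝ) : Finset {j : α // j ≠ i} → ℝ :=
  fun S =>
    if S = Finset.univ then v Finset.univ - c
    else if S = ∅ then 0
    else max (v (insert i (S.image Subtype.val)) - c) (v (S.image Subtype.val))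

lemma image_univ_val {α : Type*} [Fintype α] [DecidableEq α] (i : α) :
    (Finset.univ : Finset {j : α // j ≠ i}).image Subtype.val = Finset.univ.erase i := by
  ext k
  simp [Finset.mem_erase, eq_comm]

lemma reducedGame_eq_max {α : Type*} [Fintype α] [DecidableEq α]
    (v : Finset α → ℝ) (hv0 : v ∅ = 0) (i : α) (c : ℝ)
    (hc1 : v {i} ≤ c) (hc2 : c ≤ v Finset.univ - v (Finset.univ.erase i))
    (S : Finset {j : α // j ≠ i}) :
    reducedGame v i c S =
      max (v (insert i (S.image Subtype.val)) - c) (v (S.image Subtype.val)) := by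
  unfold reducedGame
  split_ifs with h1 h2
  · subst h1
    rw [image_univ_val, Finset.insert_erase (Finset.mem_univ i)]
    rw [max_eq_left (by linarith)]
  · subst h2
    simp only [Finset.image_empty, hv0]
    have h5 : v (insert i ∅) = v {i} := rfl
    rw [max_eq_right (by linarith)]
  · rfl

lemma key_max {N : Type*} [DecidableEq N]
    (v : Finset N → ℝ) (hconv : IsConvex v) (i k : N) (c : ℝ) (A B : Finset N)
    (hAB : A ⊆ B) (hkB : k ∉ B) (hiB : i ∉ B) (hik : k ≠ i) :
    max (v (insert i (insert k A)) - c) (v (insert k A)) -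
      max (v (insert i A) - c) (v A) ≤
    max (v (insert i (insert k B)) - c) (v (insert k B)) -
      max (v (insert i B) - c) (v B) := by
  have hkA : k ∉ A := fun h => hkB (hAB h)
  have hkiB : k ∉ insert i B := by simp [hik, hkB]
  have hkiA : k ∉ insert i A := by simp [hik, hkA]
  have hiB' : i ∉ insert k B := by simp [Ne.symm hik, hiB]
  have H1 : v (insert i (insert k A)) - v (insert i A) ≤
      v (insert i (insert k B)) - v (insert i B) := by
    have := hconv k (insert i A) (insert i B) (Finset.insert_subset_insert _ hAB) hkiB
    rwa [Finset.insert_comm k i A, Finset.insert_comm k i B] at this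
  have H2 : v (insert k A) - v A ≤ v (insert k B) - v B := hconv k A B hAB hkB
  have H3 : v (insert i A) - v A ≤ v (insert i B) - v B := hconv i A B hAB hiB
  have H4 : v (insert i (insert k A)) - v (insert k A) ≤
      v (insert i (insert k B)) - v (insert k B) :=
    hconv i (insert k A) (insert k B) (Finset.insert_subset_insert _ hAB) hiB'
  have H5 : v (insert k B) - v B ≤ v (insert i (insert k B)) - v (insert i B) := by
    have := hconv k B (insert i B) (Finset.subset_insert _ _) hkiB
    rwa [Finset.insert_comm k i B] at this
  rcases max_choice (v (insert i A) - c) (v A) with h1 | h1 <;>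
  rcases max_choice (v (insert i B) - c) (v B) with h2 | h2 <;>
  rcases max_choice (v (insert i (insert k A)) - c) (v (insert k A)) with h3 | h3 <;>
  rcases max_choice (v (insert i (insert k B)) - c) (v (insert k B)) with h4 | h4 <;>
  rw [h1, h2, h3, h4] <;>
  [skip; skip; skip; skip; skip; skip; skip; skip; skip; skip; skip; skip; skip; skip; skip; skip] <;>
  · have l1 := le_max_left (v (insert i A) - c) (v A)
    have l2 := le_max_right (v (insert i A) - c) (v A)
    have l3 := le_max_left (v (insert i B) - c) (v B)
    have l4 := le_max_right (v (insert i B) - c) (v B)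
    have l5 := le_max_left (v (insert i (insert k A)) - c) (v (insert k A))
    have l6 := le_max_right (v (insert i (insert k A)) - c) (v (insert k A))
    have l7 := le_max_left (v (insert i (insert k B)) - c) (v (insert k B))
    have l8 := le_max_right (v (insert i (insert k B)) - c) (v (insert k B))
    rw [h1] at l1 l2; rw [h2] at l3 l4; rw [h3] at l5 l6; rw [h4] at l7 l8
    linarith

theorem stmt0 {N : Type*} [Fintype N] [DecidableEq N] [Nonempty N]
    (v : Finset N → ℝ) (hv0 : v ∅ = 0)
    (hconv : IsConvex v) (i : N) (c : ℝ)
    (hc1 : v {i} ≤ c) (hc2 : c ≤ v Finset.univ - v (Finset.univ.erase i)) :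
    IsConvex (reducedGame v i c) := by
  intro j S T hST hjT
  have hr := reducedGame_eq_max v hv0 i c hc1 hc2
  rw [hr, hr, hr, hr, Finset.image_insert, Finset.image_insert]
  have hkB : (j : N) ∉ T.image Subtype.val := by
    intro h
    obtain ⟨a, ha, hav⟩ := Finset.mem_image.1 h
    exact hjT (by rwa [Subtype.ext hav] at ha)
  have hiB : i ∉ T.image Subtype.val := by
    intro h
    obtain ⟨a, _, hav⟩ := Finset.mem_image.1 h
    exact a.2 hav
  exact key_max v hconv i j.val c _ _ (Finset.image_subset_image hST) hkB hiB j.2
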